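/- Suppose f : ℝ → EReal is k-convex, r is an r-function, and max(r*(φ), f(φ)) < +∞ for some φ > 0. Then (cv(r, f*))° is an r-function. -/

import Mathlib

open Set Filter Topology

noncomputable section

/-- `f : ℝ → EReal` is convex iff its epigraph is a convex set. -/
def EConvex (f : ℝ → EReal) : Prop :=
  Convex ℝ {p : ℝ × ℝ | f p.1 ≤ (p.2 : EReal)}

/-- The Fenchel dual `f*(a) = sup_θ (θ·a − f(θ))`. -/
def Fd (f : ℝ → EReal) : ℝ → EReal :=
  fun a => ⨆ θ : ℝ, ((θ * a : ℝ) : EReal) - f θ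

/-- The sweep `f°`: strictly positive values are swept to `+∞`. -/
def sweep (f : ℝ → EReal) : ℝ → EReal :=
  fun a => if f a ≤ 0 then f a else ⊤

/-- `speedp f = inf {a | f a > 0}`, as an extended real. -/
def speedp (f : ℝ → EReal) : EReal :=
  sInf ((fun a : ℝ => (a : EReal)) '' {a : ℝ | 0 < f a})

/-- k-convex functions. -/
def KConvex (f : ℝ → EReal) : Prop :=
  EConvex f ∧ (∃ θ : ℝ, 0 < θ ∧ f θ < ⊤) ∧ (∀ θ : ℝ, θ < 0 → f θ = ⊤)

/-- The closure `cl f`: the greatest lower semicontinuous function beneath `f`. -/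
def ecl (f : ℝ → EReal) : ℝ → EReal :=
  fun x => ⨆ g : {g : ℝ → EReal // LowerSemicontinuous g ∧ ∀ y, g y ≤ f y}, g.1 x

/-- r-functions: increasing, convex, somewhere in `(−∞,0)`, left continuous,
and `+∞` whenever strictly positive. -/
def RFunction (r : ℝ → EReal) : Prop :=
  Monotone r ∧ EConvex r ∧ (∃ a : ℝ, ⊥ < r a ∧ r a < 0) ∧
    (∀ a : ℝ, ContinuousWithinAt r (Set.Iio a) a) ∧
    (∀ a : ℝ, 0 < r a → r a = ⊤)

/-- The greatest lower semicontinuous convex function beneath `f` and `g`. -/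
def cv (f g : ℝ → EReal) : ℝ → EReal :=
  fun x => ⨆ h : {h : ℝ → EReal //
    LowerSemicontinuous h ∧ EConvex h ∧ (∀ y, h y ≤ f y) ∧ (∀ y, h y ≤ g y)}, h.1 x

/-- `enat f`: the pointwise sup of convex minorants `g` of `f` with `g θ / θ`
antitone on `(0,∞)`. -/
def enat (f : ℝ → EReal) : ℝ → EReal :=
  fun x => ⨆ g : {g : ℝ → EReal // EConvex g ∧ (∀ y, g y ≤ f y) ∧
      AntitoneOn (fun θ : ℝ => g θ * ((θ⁻¹ : ℝ) : EReal)) (Set.Ioi 0)}, g.1 x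

/-- `varthetapp f = sup {θ | f θ = enat f θ}`. -/
def varthetapp (f : ℝ → EReal) : EReal :=
  sSup ((fun θ : ℝ => (θ : EReal)) '' {θ : ℝ | f θ = enat f θ})

/-- `flt f = ((f*)°)*`. -/
def flt (f : ℝ → EReal) : ℝ → EReal := Fd (sweep (Fd f))

/-- The set where `f` is finite. -/
def Phi (f : ℝ → EReal) : Set ℝ := {θ : ℝ | f θ < ⊤}

/-- `A⁺`: points in `A` or above a point of `A`. -/
def plusSet (A : Set ℝ) : Set ℝ := {x : ℝ | ∃ a ∈ A, a ≤ x}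

/-- The subdifferential of `f` at `φ`. -/
def esubdiff (f : ℝ → EReal) (φ : ℝ) : Set ℝ :=
  {a : ℝ | ∀ θ : ℝ, f φ + ((a * (θ - φ) : ℝ) : EReal) ≤ f θ}

open Classical in
/-- The convex indicator of a set: `0` on `C` and `+∞` off it. -/
def echi (C : Set ℝ) : ℝ → EReal := fun θ => if θ ∈ C then 0 else ⊤

/-- An epigraph-convex function which is `≤ 0` on a left half-line is monotone. -/
lemma econvex_monotone_aux (h : ℝ → EReal) (hc : EConvex h) (a₀ : ℝ)
    (h0 : ∀ z ≤ a₀, h z ≤ 0) : Monotone h := by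
  intro x y hxy
  rcases eq_or_lt_of_le hxy with rfl | hxy
  · exact le_rfl
  by_contra hlt
  push_neg at hlt
  obtain ⟨t, ht1, ht2⟩ := EReal.exists_between_coe_real hlt
  obtain ⟨u, hu1, hu2⟩ := EReal.exists_between_coe_real ht2
  have htu : t < u := EReal.coe_lt_coe_iff.mp hu1
  set q : ℝ := (y - x) * (|t| + 1) / (u - t) with hqdef
  set z : ℝ := min (min x a₀) (y - q) - 1 with hzdef
  have hzx : z < x := by
    have : min (min x a₀) (y - q) ≤ x := le_trans (min_le_left _ _) (min_le_left _ _)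
    simp only [hzdef]; linarith
  have hza : z ≤ a₀ := by
    have : min (min x a₀) (y - q) ≤ a₀ := le_trans (min_le_left _ _) (min_le_right _ _)
    simp only [hzdef]; linarith
  have hzq : q < y - z := by
    have : min (min x a₀) (y - q) ≤ y - q := min_le_right _ _
    simp only [hzdef]; linarith
  have hD : 0 < y - z := by linarith
  have hyx : 0 < y - x := by linarith
  have hut : 0 < u - t := by linarith
  set A : ℝ := (y - x) / (y - z) with hAdef
  set B : ℝ := (x - z) / (y - z) with hBdef
  have hA : 0 ≤ A := div_nonneg hyx.le hD.le
  have hB : 0 ≤ B := div_nonneg (by linarith) hD.le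
  have hAB : A + B = 1 := by
    rw [hAdef, hBdef, ← add_div, div_eq_one_iff_eq hD.ne']
    ring
  have hp : (z, (0:ℝ)) ∈ {p : ℝ × ℝ | h p.1 ≤ (p.2 : EReal)} := by
    simpa using h0 z hza
  have hq2 : (y, t) ∈ {p : ℝ × ℝ | h p.1 ≤ (p.2 : EReal)} := ht1.le
  have hmem := hc hp hq2 hA hB hAB
  have hpt : A • ((z, (0:ℝ)) : ℝ × ℝ) + B • ((y, t) : ℝ × ℝ) = (x, B * t) := by
    simp only [Prod.smul_mk, Prod.mk_add_mk, smul_eq_mul, Prod.mk.injEq]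
    constructor
    · rw [hAdef, hBdef, div_mul_eq_mul_div, div_mul_eq_mul_div, ← add_div, div_eq_iff hD.ne']
      ring
    · ring
  rw [hpt] at hmem
  have hmem' : h x ≤ ((B * t : ℝ) : EReal) := hmem
  have h1 : (y - x) * (|t| + 1) < (y - z) * (u - t) := by
    rw [hqdef, div_lt_iff₀ hut] at hzq
    linarith
  have hbt : B * t < u := by
    rw [hBdef, div_mul_eq_mul_div, div_lt_iff₀ hD]
    nlinarith [le_abs_self t, neg_abs_le t, hyx, h1]
  exact absurd hu2 (hmem'.trans_lt (EReal.coe_lt_coe_iff.mpr hbt)).not_gt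

/-- Monotone + lower semicontinuous ⇒ left continuous. -/
lemma leftCont_aux (c : ℝ → EReal) (hm : Monotone c) (hl : LowerSemicontinuous c) (a : ℝ) :
    Tendsto c (𝓝[<] a) (𝓝 (c a)) := by
  refine tendsto_order.2 ⟨fun b hb => ?_, fun b hb => ?_⟩
  · exact (hl a b hb).filter_mono nhdsWithin_le_nhds
  · filter_upwards [self_mem_nhdsWithin] with x hx
    exact lt_of_le_of_lt (hm (le_of_lt hx)) hb

lemma sweep_le_coe_iff (c : ℝ → EReal) (x t : ℝ) :
    sweep c x ≤ (t : EReal) ↔ c x ≤ (t : EReal) ∧ c x ≤ 0 := by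
  unfold sweep
  split_ifs with h
  · simp [h]
  · constructor
    · intro h'
      exact absurd (top_le_iff.mp h') (EReal.coe_ne_top t)
    · rintro ⟨-, h0⟩
      exact absurd h0 h

/-- Lemma `s-i good`: if `f` is k-convex, `r` is an r-function and
`max (r*(φ), f(φ)) < ∞` for some `φ > 0`, then `(cv(r, f*))°` is an r-function. -/
theorem rFunction_sweep_cv (f r : ℝ → EReal) (hf : KConvex f) (hr : RFunction r)
    (hfin : ∃ φ : ℝ, 0 < φ ∧ max (Fd r φ) (f φ) < ⊤) :
    RFunction (sweep (cv r (Fd f))) := by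
  obtain ⟨hrmono, hrconv, ⟨a₀, ha₀bot, ha₀neg⟩, hrleft, hrpos⟩ := hr
  obtain ⟨φ, hφpos, hφ⟩ := hfin
  obtain ⟨K, hK1, hK2⟩ := EReal.exists_between_coe_real hφ
  have hKr : Fd r φ ≤ (K : EReal) := le_trans (le_max_left _ _) hK1.le
  have hKf : f φ ≤ (K : EReal) := le_trans (le_max_right _ _) hK1.le
  set ℓ : ℝ → EReal := fun a => ((φ * a - K : ℝ) : EReal) with hldef
  -- ℓ ≤ r
  have hℓr : ∀ θ, ℓ θ ≤ r θ := by
    intro θ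
    have hFd : ((θ * φ : ℝ) : EReal) - r θ ≤ (K : EReal) :=
      le_trans (le_iSup (fun θ' : ℝ => ((θ' * φ : ℝ) : EReal) - r θ') θ) hKr
    by_cases hT : r θ = ⊤
    · rw [hT]; exact le_top
    by_cases hB : r θ = ⊥
    · rw [hB, EReal.sub_bot (EReal.coe_ne_bot _)] at hFd
      exact absurd (top_le_iff.mp hFd) (EReal.coe_ne_top K)
    · lift r θ to ℝ using ⟨hT, hB⟩ with v hv
      rw [← EReal.coe_sub] at hFd
      have : θ * φ - v ≤ K := EReal.coe_le_coe_iff.mp hFd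
      exact EReal.coe_le_coe_iff.mpr (by linarith [this])
  -- ℓ ≤ Fd f
  have hℓg : ∀ a, ℓ a ≤ Fd f a := by
    intro a
    have h1 : ((φ * a : ℝ) : EReal) - f φ ≤ Fd f a :=
      le_iSup (fun θ : ℝ => ((θ * a : ℝ) : EReal) - f θ) φ
    refine le_trans ?_ h1
    show ((φ * a - K : ℝ) : EReal) ≤ ((φ * a : ℝ) : EReal) - f φ
    rw [EReal.coe_sub]
    exact EReal.sub_le_sub le_rfl hKf
  have hℓlsc : LowerSemicontinuous ℓ :=
    (continuous_coe_real_ereal.comp (by continuity)).lowerSemicontinuous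
  have hℓconv : EConvex ℓ := by
    unfold EConvex
    have hset : {p : ℝ × ℝ | ℓ p.1 ≤ (p.2 : EReal)} = {p : ℝ × ℝ | φ * p.1 - K ≤ p.2} := by
      ext p
      exact EReal.coe_le_coe_iff
    rw [hset]
    intro p hp q hq a b ha hb hab
    simp only [mem_setOf_eq, Prod.fst_add, Prod.snd_add, Prod.smul_fst, Prod.smul_snd,
      smul_eq_mul] at *
    have hK' : a * K + b * K = K := by rw [← add_mul, hab, one_mul]
    nlinarith [mul_le_mul_of_nonneg_left hp ha, mul_le_mul_of_nonneg_left hq hb, hK']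
  set c : ℝ → EReal := cv r (Fd f) with hcdef
  have hcr : ∀ x, c x ≤ r x := fun x => iSup_le fun h => h.2.2.2.1 x
  have hℓc : ∀ x, ℓ x ≤ c x := fun x =>
    le_iSup (fun h : {h : ℝ → EReal // LowerSemicontinuous h ∧ EConvex h ∧
      (∀ y, h y ≤ r y) ∧ (∀ y, h y ≤ Fd f y)} => h.1 x) ⟨ℓ, hℓlsc, hℓconv, hℓr, hℓg⟩
  have hcbot : ∀ x, ⊥ < c x := fun x => lt_of_lt_of_le (EReal.bot_lt_coe _) (hℓc x)
  have hcmono : Monotone c := by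
    intro x y hxy
    refine iSup_mono fun h => ?_
    exact econvex_monotone_aux h.1 h.2.2.1 a₀
      (fun z hz => le_trans (h.2.2.2.1 z) (le_trans (hrmono hz) ha₀neg.le)) hxy
  have hclsc : LowerSemicontinuous c := lowerSemicontinuous_iSup fun h => h.2.1
  have hcconv : EConvex c := by
    unfold EConvex
    have hset : {p : ℝ × ℝ | c p.1 ≤ (p.2 : EReal)} =
        ⋂ h : {h : ℝ → EReal // LowerSemicontinuous h ∧ EConvex h ∧
          (∀ y, h y ≤ r y) ∧ (∀ y, h y ≤ Fd f y)}, {p : ℝ × ℝ | h.1 p.1 ≤ (p.2 : EReal)} := by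
      ext p
      simp only [hcdef, cv, mem_setOf_eq, mem_iInter, iSup_le_iff]
    rw [hset]
    exact convex_iInter fun h => h.2.2.1
  refine ⟨?_, ?_, ?_, ?_, ?_⟩
  · -- monotone
    intro x y hxy
    unfold sweep
    split_ifs with h1 h2 h2
    · exact hcmono hxy
    · exact le_top
    · exact absurd (le_trans (hcmono hxy) h2) h1
    · exact le_rfl
  · -- convex
    unfold EConvex
    intro p hp q hq a b ha hb hab
    rw [mem_setOf_eq, sweep_le_coe_iff] at hp hq ⊢
    constructor
    · exact hcconv hp.1 hq.1 ha hb hab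
    · have h1 : (p.1, (0:ℝ)) ∈ {p : ℝ × ℝ | c p.1 ≤ (p.2 : EReal)} := by simpa using hp.2
      have h2 : (q.1, (0:ℝ)) ∈ {p : ℝ × ℝ | c p.1 ≤ (p.2 : EReal)} := by simpa using hq.2
      have h3 := hcconv h1 h2 ha hb hab
      have h4 : a • ((p.1, (0:ℝ)) : ℝ × ℝ) + b • ((q.1, (0:ℝ)) : ℝ × ℝ) =
          ((a • p + b • q).1, (0:ℝ)) := by
        simp [Prod.ext_iff, smul_eq_mul]
      rw [h4] at h3
      simpa using h3
  · -- existence of negative value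
    refine ⟨a₀, ?_, ?_⟩
    · have hle : c a₀ ≤ 0 := le_trans (hcr a₀) ha₀neg.le
      have : sweep c a₀ = c a₀ := if_pos hle
      rw [this]
      exact hcbot a₀
    · have hlt : c a₀ < 0 := lt_of_le_of_lt (hcr a₀) ha₀neg
      have : sweep c a₀ = c a₀ := if_pos hlt.le
      rw [this]
      exact hlt
  · -- left continuity
    intro a
    have hct := leftCont_aux c hcmono hclsc a
    show Tendsto (sweep c) (𝓝[Iio a] a) (𝓝 (sweep c a))
    by_cases h0 : c a ≤ 0
    · have hsa : sweep c a = c a := if_pos h0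
      rw [hsa]
      refine hct.congr' ?_
      filter_upwards [self_mem_nhdsWithin] with x hx
      exact (if_pos (le_trans (hcmono (le_of_lt hx)) h0)).symm
    · push_neg at h0
      have hsa : sweep c a = ⊤ := if_neg (not_le.mpr h0)
      rw [hsa]
      have hev : ∀ᶠ x in 𝓝[<] a, sweep c x = ⊤ :=
        Filter.eventually_of_mem (hct (Ioi_mem_nhds h0))
          (fun x hx => if_neg (not_le.mpr hx))
      exact Tendsto.congr' (hev.mono fun x hx => hx.symm) tendsto_const_nhds
  · -- positive ⇒ top
    intro a ha
    unfold sweep at ha ⊢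
    split_ifs at ha ⊢ with h
    · exact absurd h (not_le.mpr ha)
    · rfl
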